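/- Let α ∈ ℝ and c ∈ ℝ with c ≠ 0, and let q_w be the rogue wave q_w(x,t) = c·(−64c²α²t² − 16c⁴t² − 32c²αxt + 16ic²t − 4c²x² + 3)·exp(−2i(2α²t − c²t + αx)) / (64α²c²t² + 16c⁴t² + 32αc²tx + 4c²x² + 1). Then with X = x + 4αt one has |q_w(x,t)|² = c²·((3 − 16c⁴t² − 4c²X²)² + 256c⁴t²) / (1 + 16c⁴t² + 4c²X²)² for all (x,t); in particular |q_w(x,t)| ≤ 3|c| for all (x,t) ∈ ℝ², with equality if and only if (x,t) = (0,0). -/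

import Mathlib

open Complex

/-- Partial derivative in `x` of a function of `(x,t)`. -/
noncomputable def pX (f : ℝ → ℝ → ℂ) : ℝ → ℝ → ℂ := fun x t => deriv (fun x' => f x' t) x

/-- Partial derivative in `t` of a function of `(x,t)`. -/
noncomputable def pT (f : ℝ → ℝ → ℂ) : ℝ → ℝ → ℂ := fun x t => deriv (fun t' => f x t') t

/-- The rogue wave
`q_w(x,t) = c(−64c²α²t² − 16c⁴t² − 32c²αxt + 16ic²t − 4c²x² + 3) e^{−2i(2α²t − c²t + αx)}
  / (64α²c²t² + 16c⁴t² + 32αc²tx + 4c²x² + 1)`. -/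
noncomputable def rogueWave (α c : ℝ) : ℝ → ℝ → ℂ := fun x t =>
  (c : ℂ) * (-64 * (c : ℂ) ^ 2 * (α : ℂ) ^ 2 * (t : ℂ) ^ 2 - 16 * (c : ℂ) ^ 4 * (t : ℂ) ^ 2
      - 32 * (c : ℂ) ^ 2 * (α : ℂ) * (x : ℂ) * (t : ℂ) + 16 * I * (c : ℂ) ^ 2 * (t : ℂ)
      - 4 * (c : ℂ) ^ 2 * (x : ℂ) ^ 2 + 3)
    * Complex.exp (-2 * I * ((2 * α ^ 2 * t - c ^ 2 * t + α * x : ℝ) : ℂ))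
    / ((64 * α ^ 2 * c ^ 2 * t ^ 2 + 16 * c ^ 4 * t ^ 2 + 32 * α * c ^ 2 * t * x
        + 4 * c ^ 2 * x ^ 2 + 1 : ℝ) : ℂ)

lemma sq_le_imp {a b : ℝ} (ha : 0 ≤ a) (hb : 0 ≤ b) (h : a ^ 2 ≤ b ^ 2) : a ≤ b := by
  calc a = Real.sqrt (a ^ 2) := (Real.sqrt_sq ha).symm
    _ ≤ Real.sqrt (b ^ 2) := Real.sqrt_le_sqrt h
    _ = b := Real.sqrt_sq hb

lemma sq_eq_imp {a b : ℝ} (ha : 0 ≤ a) (hb : 0 ≤ b) (h : a ^ 2 = b ^ 2) : a = b := by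
  calc a = Real.sqrt (a ^ 2) := (Real.sqrt_sq ha).symm
    _ = Real.sqrt (b ^ 2) := by rw [h]
    _ = b := Real.sqrt_sq hb

/-- with `X = x + 4αt`, the squared modulus of the rogue wave is
`c²((3 − 16c⁴t² − 4c²X²)² + 256c⁴t²)/(1 + 16c⁴t² + 4c²X²)²`; in particular
`|q_w| ≤ 3|c|`, with equality iff `(x,t) = (0,0)`. -/
theorem statement15 (α c : ℝ) (hc : c ≠ 0) :
    ∀ x t : ℝ,
      (‖rogueWave α c x t‖ ^ 2
        = c ^ 2 * ((3 - 16 * c ^ 4 * t ^ 2 - 4 * c ^ 2 * (x + 4 * α * t) ^ 2) ^ 2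
              + 256 * c ^ 4 * t ^ 2)
          / (1 + 16 * c ^ 4 * t ^ 2 + 4 * c ^ 2 * (x + 4 * α * t) ^ 2) ^ 2)
      ∧ ‖rogueWave α c x t‖ ≤ 3 * |c|
      ∧ (‖rogueWave α c x t‖ = 3 * |c| ↔ x = 0 ∧ t = 0) := by
  intro x t
  have hc2 : (0:ℝ) < c ^ 2 := by positivity
  have hDpos : (0:ℝ) < 64 * α ^ 2 * c ^ 2 * t ^ 2 + 16 * c ^ 4 * t ^ 2 + 32 * α * c ^ 2 * t * x
        + 4 * c ^ 2 * x ^ 2 + 1 := by nlinarith [sq_nonneg (8*α*c*t + 2*c*x), sq_nonneg (c^2*t)]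
  have hD'pos : (0:ℝ) < 1 + 16 * c ^ 4 * t ^ 2 + 4 * c ^ 2 * (x + 4 * α * t) ^ 2 := by positivity
  have hM : (c : ℂ) * (-64 * (c : ℂ) ^ 2 * (α : ℂ) ^ 2 * (t : ℂ) ^ 2 - 16 * (c : ℂ) ^ 4 * (t : ℂ) ^ 2
      - 32 * (c : ℂ) ^ 2 * (α : ℂ) * (x : ℂ) * (t : ℂ) + 16 * I * (c : ℂ) ^ 2 * (t : ℂ)
      - 4 * (c : ℂ) ^ 2 * (x : ℂ) ^ 2 + 3)
      = ((c * (-64 * c ^ 2 * α ^ 2 * t ^ 2 - 16 * c ^ 4 * t ^ 2 - 32 * c ^ 2 * α * x * t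
            - 4 * c ^ 2 * x ^ 2 + 3) : ℝ) : ℂ) + ((c * (16 * c ^ 2 * t) : ℝ) : ℂ) * I := by
    push_cast; ring
  have hsq : ‖rogueWave α c x t‖ ^ 2
      = c ^ 2 * ((3 - 16 * c ^ 4 * t ^ 2 - 4 * c ^ 2 * (x + 4 * α * t) ^ 2) ^ 2
            + 256 * c ^ 4 * t ^ 2)
        / (1 + 16 * c ^ 4 * t ^ 2 + 4 * c ^ 2 * (x + 4 * α * t) ^ 2) ^ 2 := by
    have h2 : ‖rogueWave α c x t‖ ^ 2
        = ((c * (-64 * c ^ 2 * α ^ 2 * t ^ 2 - 16 * c ^ 4 * t ^ 2 - 32 * c ^ 2 * α * x * t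
              - 4 * c ^ 2 * x ^ 2 + 3)) ^ 2 + (c * (16 * c ^ 2 * t)) ^ 2)
          / (64 * α ^ 2 * c ^ 2 * t ^ 2 + 16 * c ^ 4 * t ^ 2 + 32 * α * c ^ 2 * t * x
              + 4 * c ^ 2 * x ^ 2 + 1) ^ 2 := by
      unfold rogueWave
      rw [hM, norm_div, norm_mul, Complex.norm_exp]
      have hre : (-2 * I * ((2 * α ^ 2 * t - c ^ 2 * t + α * x : ℝ) : ℂ)).re = 0 := by
        simp [← Complex.ofReal_pow]
      rw [hre, Real.exp_zero, mul_one, Complex.norm_real, Real.norm_eq_abs, div_pow, Complex.sq_norm,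
        Complex.normSq_add_mul_I, _root_.sq_abs]
    rw [h2, div_eq_div_iff (by positivity) (by positivity)]
    ring
  have hE0 : 0 ≤ ‖rogueWave α c x t‖ := norm_nonneg _
  have h3c : (0:ℝ) ≤ 3 * |c| := by positivity
  have hle2 : ‖rogueWave α c x t‖ ^ 2 ≤ (3 * |c|) ^ 2 := by
    have h9 : (3 * |c|) ^ 2 = 9 * c ^ 2 := by rw [mul_pow, _root_.sq_abs]; ring
    rw [hsq, h9, div_le_iff₀ (by positivity)]
    nlinarith [sq_nonneg (c ^ 3 * t), sq_nonneg (c ^ 2 * (x + 4 * α * t)),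
      sq_nonneg ((16 * c ^ 4 * t ^ 2 + 4 * c ^ 2 * (x + 4 * α * t) ^ 2) * c)]
  refine ⟨hsq, sq_le_imp hE0 h3c hle2, ?_, ?_⟩
  · intro h
    have h2 : c ^ 2 * ((3 - 16 * c ^ 4 * t ^ 2 - 4 * c ^ 2 * (x + 4 * α * t) ^ 2) ^ 2
          + 256 * c ^ 4 * t ^ 2)
        = 9 * c ^ 2 * (1 + 16 * c ^ 4 * t ^ 2 + 4 * c ^ 2 * (x + 4 * α * t) ^ 2) ^ 2 := by
      have := hsq
      rw [h, mul_pow, _root_.sq_abs] at this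
      rw [eq_comm, div_eq_iff (by positivity)] at this
      linarith [this]
    have hc6 : (0:ℝ) < c ^ 6 := by positivity
    have hc4 : (0:ℝ) < c ^ 4 := by positivity
    have ht2 : c ^ 6 * t ^ 2 ≤ 0 := by
      nlinarith [sq_nonneg (c ^ 2 * (x + 4 * α * t)),
        sq_nonneg ((16 * c ^ 4 * t ^ 2 + 4 * c ^ 2 * (x + 4 * α * t) ^ 2) * c)]
    have ht : t = 0 := by
      have : t ^ 2 = 0 := le_antisymm (by nlinarith) (sq_nonneg t)
      exact pow_eq_zero_iff two_ne_zero |>.mp this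
    subst ht
    norm_num at h2
    refine ⟨?_, rfl⟩
    have hx2 : c ^ 4 * x ^ 2 ≤ 0 := by nlinarith [sq_nonneg (c ^ 2 * x ^ 2 * c)]
    have : x ^ 2 = 0 := le_antisymm (by nlinarith) (sq_nonneg x)
    exact pow_eq_zero_iff two_ne_zero |>.mp this
  · rintro ⟨rfl, rfl⟩
    apply sq_eq_imp hE0 h3c
    rw [hsq, mul_pow, _root_.sq_abs]
    norm_num
    ring
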